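/- Let n ≥ 2, let Q be an n×n real symmetric positive semidefinite matrix, and let C be a 2×n real matrix with rank C = 2. Then there exists a 2×2 real symmetric positive semidefinite matrix R such that the image of the set {x ∈ ℝⁿ | xᵀQx ≤ 1} under the linear map x ↦ Cx equals {y ∈ ℝ² | yᵀRy ≤ 1}; in particular this image is either the whole plane (rank R = 0), a strip between two parallel lines (rank R = 1), or the region bounded by an ellipse (rank R = 2). -/

import Mathlib

open Matrix

private lemma exists_perp (n : ℕ) (f : (Fin n → ℝ) →ₗ[ℝ] (Fin n → ℝ)) (K : Submodule ℝ (Fin n → ℝ))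
    (b : Fin n → ℝ) : ∃ v ∈ K, ∀ w ∈ K, (b + f v) ⬝ᵥ f w = 0 := by
  classical
  set e : EuclideanSpace ℝ (Fin n) ≃ₗ[ℝ] (Fin n → ℝ) :=
    (EuclideanSpace.equiv (Fin n) ℝ).toLinearEquiv with he
  set S : Submodule ℝ (EuclideanSpace ℝ (Fin n)) := (K.map f).comap e.toLinearMap with hS
  set b' : EuclideanSpace ℝ (Fin n) := (EuclideanSpace.equiv (Fin n) ℝ).symm b with hb
  have hproj : ∀ w ∈ S, inner ℝ (b' - (S.orthogonalProjection b' : EuclideanSpace ℝ (Fin n))) w = 0 :=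
    fun w hw => S.starProjection_inner_eq_zero b' w hw
  set p : EuclideanSpace ℝ (Fin n) := (S.orthogonalProjection b' : EuclideanSpace ℝ (Fin n)) with hp
  have hpS : p ∈ S := (S.orthogonalProjection b').2
  obtain ⟨v, hvK, hv⟩ : ∃ v ∈ K, f v = e p := hpS
  refine ⟨-v, neg_mem hvK, ?_⟩
  intro w hw
  have hwS : (EuclideanSpace.equiv (Fin n) ℝ).symm (f w) ∈ S := by
    refine Submodule.mem_comap.2 ?_
    exact ⟨w, hw, rfl⟩
  have := hproj _ hwS
  rw [PiLp.inner_apply] at this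
  have hdot : ∑ i, (b' - p) i * ((EuclideanSpace.equiv (Fin n) ℝ).symm (f w)) i = 0 := by
    simpa [mul_comm] using this
  rw [map_neg, hv]
  have h2 : (b + -(e p)) ⬝ᵥ f w = ∑ i, (b' - p) i * f w i := by
    simp [dotProduct, sub_eq_add_neg]
    rfl
  rw [h2]
  exact hdot

/-- The projection of a (k,n)-cylinder onto a plane is again given by a quadratic
inequality with a 2×2 symmetric positive semidefinite matrix R: it is the whole plane,
a strip, or an elliptical region, according to the rank of R. -/
theorem image_cylinder_plane (n : ℕ) (hn : 2 ≤ n)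
    (Q : Matrix (Fin n) (Fin n) ℝ) (hQ : Q.PosSemidef)
    (C : Matrix (Fin 2) (Fin n) ℝ) (hrankC : C.rank = 2) :
    ∃ R : Matrix (Fin 2) (Fin 2) ℝ, R.PosSemidef ∧
      C.mulVec '' {x : Fin n → ℝ | x ⬝ᵥ Q.mulVec x ≤ 1} =
        {y : Fin 2 → ℝ | y ⬝ᵥ R.mulVec y ≤ 1} := by
  classical
  set A := open MatrixOrder in CFC.sqrt Q with hA
  have hAsymm : Aᵀ = A := by
    have := (open MatrixOrder in (CFC.sqrt_nonneg Q).posSemidef).1.eq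
    rwa [conjTranspose_eq_transpose_of_trivial] at this
  have hQsymm : Qᵀ = Q := by
    have := hQ.1.eq
    rwa [conjTranspose_eq_transpose_of_trivial] at this
  have hqbil : ∀ x z : Fin n → ℝ, x ⬝ᵥ Q.mulVec z = (A.mulVec x) ⬝ᵥ (A.mulVec z) := by
    intro x z
    conv_lhs => rw [← (open MatrixOrder in CFC.sqrt_mul_sqrt_self Q hQ.nonneg)]
    rw [← mulVec_mulVec, dotProduct_mulVec, ← mulVec_transpose, hAsymm]
  have hqnonneg : ∀ x : Fin n → ℝ, 0 ≤ x ⬝ᵥ Q.mulVec x := fun x => by simpa using hQ.dotProduct_mulVec_nonneg x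
  have hsymmQ : ∀ x z : Fin n → ℝ, x ⬝ᵥ Q.mulVec z = z ⬝ᵥ Q.mulVec x := by
    intro x z
    rw [dotProduct_mulVec, ← mulVec_transpose, hQsymm, dotProduct_comm]
  have hsurj : Function.Surjective C.mulVec := by
    have : Function.Surjective C.mulVecLin := by
      rw [← LinearMap.range_eq_top]
      apply Submodule.eq_top_of_finrank_eq
      rw [show Module.finrank ℝ ↥(LinearMap.range C.mulVecLin) = C.rank from rfl, hrankC]
      simp [Module.finrank_pi]
    simpa [Matrix.mulVecLin_apply, Function.Surjective] using this
  -- existence of a critical point in each fiber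
  have hcrit : ∀ y : Fin 2 → ℝ, ∃ x, C.mulVec x = y ∧
      ∀ v, C.mulVec v = 0 → v ⬝ᵥ Q.mulVec x = 0 := by
    intro y
    obtain ⟨x₀, hx₀⟩ := hsurj y
    obtain ⟨v, hvK, hv⟩ := exists_perp n A.mulVecLin (LinearMap.ker C.mulVecLin) (A.mulVec x₀)
    have hvK' : C.mulVec v = 0 := by simpa using hvK
    refine ⟨x₀ + v, by rw [mulVec_add, hx₀, hvK', add_zero], ?_⟩
    intro w hw
    have hmem : w ∈ LinearMap.ker C.mulVecLin := by simpa using hw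
    have h0 := hv w hmem
    rw [hqbil, dotProduct_comm]
    simpa [mulVec_add] using h0
  -- a critical point is a minimizer on its fiber
  have key : ∀ (x x' : Fin n → ℝ), (∀ v, C.mulVec v = 0 → v ⬝ᵥ Q.mulVec x = 0) →
      C.mulVec x' = C.mulVec x → x ⬝ᵥ Q.mulVec x ≤ x' ⬝ᵥ Q.mulVec x' := by
    intro x x' hx h
    have hv : C.mulVec (x' - x) = 0 := by rw [sub_eq_add_neg, mulVec_add, mulVec_neg, h]; simp
    have E : (x' - x) ⬝ᵥ Q.mulVec (x' - x) =
        x' ⬝ᵥ Q.mulVec x' - x' ⬝ᵥ Q.mulVec x - x ⬝ᵥ Q.mulVec x' + x ⬝ᵥ Q.mulVec x := by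
      simp [mulVec_sub, dotProduct_sub, sub_dotProduct]
      ring
    have h0 : (x' - x) ⬝ᵥ Q.mulVec x = 0 := hx _ hv
    have h0' : x' ⬝ᵥ Q.mulVec x = x ⬝ᵥ Q.mulVec x := by
      rw [sub_dotProduct] at h0; linarith
    have h0'' : x ⬝ᵥ Q.mulVec x' = x ⬝ᵥ Q.mulVec x := by rw [hsymmQ]; exact h0'
    have hd := hqnonneg (x' - x)
    rw [E] at hd
    linarith
  choose φ hφC hφcrit using hcrit
  set ψ : (Fin 2 → ℝ) → (Fin n → ℝ) :=
    fun z => z 0 • φ (Pi.single 0 1) + z 1 • φ (Pi.single 1 1) with hψ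
  have hψC : ∀ z, C.mulVec (ψ z) = z := by
    intro z
    rw [hψ]
    simp only [mulVec_add, mulVec_smul, hφC]
    funext j
    fin_cases j <;> simp [Pi.single_apply]
  have hψcrit : ∀ z v, C.mulVec v = 0 → v ⬝ᵥ Q.mulVec (ψ z) = 0 := by
    intro z v hv
    rw [hψ]
    simp [mulVec_add, mulVec_smul, dotProduct_add, dotProduct_smul, hφcrit _ _ hv]
  set R : Matrix (Fin 2) (Fin 2) ℝ :=
    Matrix.of fun i j => (φ (Pi.single i 1)) ⬝ᵥ Q.mulVec (φ (Pi.single j 1)) with hR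
  have hRval : ∀ z : Fin 2 → ℝ, z ⬝ᵥ R.mulVec z = (ψ z) ⬝ᵥ Q.mulVec (ψ z) := by
    intro z
    rw [hψ, hR]
    simp only [mulVec_add, mulVec_smul, dotProduct_add, add_dotProduct, dotProduct_smul,
      smul_dotProduct, smul_eq_mul]
    simp [mulVec, dotProduct, Fin.sum_univ_two]
    ring
  refine ⟨R, posSemidef_iff_dotProduct_mulVec.mpr ⟨?_, ?_⟩, ?_⟩
  · ext i j
    simp only [conjTranspose_apply, hR, Matrix.of_apply, star_trivial]
    exact hsymmQ _ _
  · intro z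
    rw [star_trivial, hRval]; exact hqnonneg (ψ z)
  · ext y
    constructor
    · rintro ⟨x, hx, rfl⟩
      show (C.mulVec x) ⬝ᵥ R.mulVec (C.mulVec x) ≤ 1
      rw [hRval]
      exact le_trans (key (ψ (C.mulVec x)) x (hψcrit _) (by rw [hψC])) hx
    · intro hy
      exact ⟨ψ y, by rw [Set.mem_setOf_eq, ← hRval y]; exact hy, hψC y⟩
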